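/- For integers n ≥ 1: 2^{-n}·∑_{l=0}^{n} C(n,l) B_l(x) B_{n-l}(x) = ∑_{l=0}^{n} C(n,l) 2^{-l} B_l B_{n-l}(x) + (n/4) B_{n-1}(x), as an identity of polynomials in x. -/

import Mathlib

open Polynomial

namespace BernHalf

open PowerSeries

noncomputable def B (x : ℚ) : ℚ⟦X⟧ :=
  PowerSeries.mk fun n => (1 / (n.factorial : ℚ)) * (Polynomial.bernoulli n).eval x

lemma coeff_B (x : ℚ) (n : ℕ) :
    PowerSeries.coeff n (B x) = (1 / (n.factorial : ℚ)) * (Polynomial.bernoulli n).eval x := by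
  simp [B]

lemma B_mul (x : ℚ) : B x * (exp ℚ - 1) = PowerSeries.X * rescale x (exp ℚ) := by
  have h := Polynomial.bernoulli_generating_function (A := ℚ) x
  convert h using 3
  ext n
  simp [B, Polynomial.aeval_def, Polynomial.eval_smul, smul_eq_mul]

lemma exp_sub_one_ne_zero {a : ℚ} (ha : a ≠ 0) : rescale a (exp ℚ) - 1 ≠ 0 := by
  intro h
  have := congrArg (PowerSeries.coeff 1) h
  simp [coeff_rescale, coeff_exp] at this
  exact ha this

lemma key (x : ℚ) :
    (4 : ℚ⟦X⟧) * (rescale (1/2 : ℚ) (B x)) ^ 2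
      = 4 * (rescale (1/2 : ℚ) (B 0) * B x) + PowerSeries.X * B x := by
  have h2C : (2 : ℚ⟦X⟧) * PowerSeries.C (1/2) = 1 := by
    rw [show (2 : ℚ⟦X⟧) = PowerSeries.C 2 from (map_ofNat (PowerSeries.C (R := ℚ)) 2).symm,
      ← map_mul]
    norm_num
  have hx := B_mul x
  have h0 := B_mul 0
  have hr0 : rescale (0 : ℚ) (exp ℚ) = 1 := by
    rw [rescale_zero]; simp
  rw [hr0, mul_one] at h0
  -- rescaled versions
  have hxh : (2 : ℚ⟦X⟧) * (rescale (1/2 : ℚ) (B x) * (rescale (1/2 : ℚ) (exp ℚ) - 1))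
      = PowerSeries.X * rescale (x * (1/2)) (exp ℚ) := by
    have := congrArg (rescale (1/2 : ℚ)) hx
    rw [map_mul, map_sub, map_one, map_mul, rescale_X, rescale_rescale] at this
    rw [this]; linear_combination (PowerSeries.X * rescale (x * (1/2)) (exp ℚ)) * h2C
  have h0h : (2 : ℚ⟦X⟧) * (rescale (1/2 : ℚ) (B 0) * (rescale (1/2 : ℚ) (exp ℚ) - 1))
      = PowerSeries.X := by
    have := congrArg (rescale (1/2 : ℚ)) h0
    rw [map_mul, map_sub, map_one, rescale_X] at this
    rw [this]; linear_combination PowerSeries.X * h2C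
  have hE2 : rescale (1/2 : ℚ) (exp ℚ) * rescale (1/2 : ℚ) (exp ℚ) = exp ℚ := by
    rw [exp_mul_exp_eq_exp_add]
    norm_num
  have hRx : rescale (x * (1/2)) (exp ℚ) * rescale (x * (1/2)) (exp ℚ) = rescale x (exp ℚ) := by
    rw [exp_mul_exp_eq_exp_add]
    ring_nf
  have hu : rescale (1/2 : ℚ) (exp ℚ) - 1 ≠ 0 := exp_sub_one_ne_zero (by norm_num)
  have hv : exp ℚ - 1 ≠ 0 := by
    have : rescale (1 : ℚ) (exp ℚ) - 1 ≠ 0 := exp_sub_one_ne_zero one_ne_zero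
    simpa [rescale_one] using this
  have hM : ((rescale (1/2 : ℚ) (exp ℚ) - 1) ^ 2 * (exp ℚ - 1)) ≠ 0 :=
    mul_ne_zero (pow_ne_zero _ hu) hv
  apply mul_right_cancel₀ hM
  set u := rescale (1/2 : ℚ) (exp ℚ) - 1 with hu_def
  have hv2 : exp ℚ - 1 = u * u + 2 * u := by
    rw [hu_def]; linear_combination -hE2
  calc (4 : ℚ⟦X⟧) * (rescale (1/2 : ℚ) (B x)) ^ 2 * (u ^ 2 * (exp ℚ - 1))
      = (2 * (rescale (1/2 : ℚ) (B x) * u)) * (2 * (rescale (1/2 : ℚ) (B x) * u)) * (exp ℚ - 1) := by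
        ring
    _ = (PowerSeries.X * rescale (x * (1/2)) (exp ℚ)) * (PowerSeries.X * rescale (x * (1/2)) (exp ℚ)) * (exp ℚ - 1) := by
        rw [hxh]
    _ = PowerSeries.X ^ 2 * (rescale (x * (1/2)) (exp ℚ) * rescale (x * (1/2)) (exp ℚ)) * (exp ℚ - 1) := by
        ring
    _ = PowerSeries.X ^ 2 * rescale x (exp ℚ) * (exp ℚ - 1) := by rw [hRx]
    _ = PowerSeries.X ^ 2 * rescale x (exp ℚ) * (u * u + 2 * u) := by rw [← hv2]
    _ = 2 * ((2 * (rescale (1/2 : ℚ) (B 0) * u)) * (PowerSeries.X * rescale x (exp ℚ))) * u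
          + PowerSeries.X * (PowerSeries.X * rescale x (exp ℚ)) * u ^ 2 := by
        rw [h0h]; ring
    _ = 2 * ((2 * (rescale (1/2 : ℚ) (B 0) * u)) * (B x * (exp ℚ - 1))) * u
          + PowerSeries.X * (B x * (exp ℚ - 1)) * u ^ 2 := by rw [hx]
    _ = (4 * (rescale (1/2 : ℚ) (B 0) * B x) + PowerSeries.X * B x) * (u ^ 2 * (exp ℚ - 1)) := by
        ring

end BernHalf

theorem bernoulli_half_convolution_aux (n : ℕ) (hn : 1 ≤ n) (x : ℚ) :
    (1 / 2 ^ n) * ∑ l ∈ Finset.range (n + 1),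
        (n.choose l : ℚ) * (Polynomial.bernoulli l).eval x * (Polynomial.bernoulli (n - l)).eval x
      = (∑ l ∈ Finset.range (n + 1),
          (n.choose l : ℚ) * (1 / 2 ^ l) * _root_.bernoulli l * (Polynomial.bernoulli (n - l)).eval x)
        + ((n : ℚ) / 4) * (Polynomial.bernoulli (n - 1)).eval x := by
  obtain ⟨m, rfl⟩ : ∃ m, n = m + 1 := ⟨n - 1, (Nat.succ_pred_eq_of_pos hn).symm⟩
  have hk := congrArg (PowerSeries.coeff (m + 1)) (BernHalf.key x)
  rw [show (4 : PowerSeries ℚ) = PowerSeries.C 4 from (map_ofNat _ 4).symm, sq] at hk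
  rw [map_add, PowerSeries.coeff_C_mul, PowerSeries.coeff_C_mul, PowerSeries.coeff_succ_X_mul,
    PowerSeries.coeff_mul, PowerSeries.coeff_mul,
    Finset.Nat.sum_antidiagonal_eq_sum_range_succ_mk,
    Finset.Nat.sum_antidiagonal_eq_sum_range_succ_mk] at hk
  simp only [PowerSeries.coeff_rescale, BernHalf.coeff_B, Polynomial.bernoulli_eval_zero] at hk
  set A := ∑ l ∈ Finset.range (m + 1 + 1),
      (1 / 2 : ℚ) ^ l * (1 / (l.factorial : ℚ) * (Polynomial.bernoulli l).eval x) *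
        ((1 / 2 : ℚ) ^ (m + 1 - l) *
          (1 / ((m + 1 - l).factorial : ℚ) * (Polynomial.bernoulli (m + 1 - l)).eval x)) with hA
  set B := ∑ l ∈ Finset.range (m + 1 + 1),
      (1 / 2 : ℚ) ^ l * (1 / (l.factorial : ℚ) * _root_.bernoulli l) *
        (1 / ((m + 1 - l).factorial : ℚ) * (Polynomial.bernoulli (m + 1 - l)).eval x) with hB
  have hk' : A = B + (1 / 4) * (1 / (m.factorial : ℚ) * (Polynomial.bernoulli m).eval x) := by
    linarith [hk]
  have hfac : ∀ l : ℕ, ((l.factorial : ℚ)) ≠ 0 := fun l : ℕ => Nat.cast_ne_zero.mpr l.factorial_ne_zero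
  have eL : (1 / 2 ^ (m + 1) : ℚ) * ∑ l ∈ Finset.range (m + 1 + 1),
        ((m + 1).choose l : ℚ) * (Polynomial.bernoulli l).eval x *
          (Polynomial.bernoulli (m + 1 - l)).eval x
      = ((m + 1).factorial : ℚ) * A := by
    rw [hA, Finset.mul_sum, Finset.mul_sum]
    refine Finset.sum_congr rfl fun l hl => ?_
    have hl' : l ≤ m + 1 := Finset.mem_range_succ_iff.mp hl
    have hp : ((1 : ℚ) / 2) ^ l * (1 / 2) ^ (m + 1 - l) = 1 / 2 ^ (m + 1) := by
      rw [← pow_add, Nat.add_sub_cancel' hl', div_pow, one_pow]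
    rw [show (((m + 1).factorial : ℚ)) *
          ((1 / 2 : ℚ) ^ l * (1 / (l.factorial : ℚ) * (Polynomial.bernoulli l).eval x) *
            ((1 / 2 : ℚ) ^ (m + 1 - l) *
              (1 / ((m + 1 - l).factorial : ℚ) * (Polynomial.bernoulli (m + 1 - l)).eval x)))
        = (((m + 1).factorial : ℚ)) * ((1 / 2 : ℚ) ^ l * (1 / 2) ^ (m + 1 - l)) *
            ((1 / (l.factorial : ℚ)) * (1 / ((m + 1 - l).factorial : ℚ)) *
              ((Polynomial.bernoulli l).eval x * (Polynomial.bernoulli (m + 1 - l)).eval x))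
        from by ring, hp, Nat.cast_choose ℚ hl']
    field_simp
  have eR : ∀ l ∈ Finset.range (m + 1 + 1),
      ((m + 1).factorial : ℚ) *
          ((1 / 2 : ℚ) ^ l * (1 / (l.factorial : ℚ) * _root_.bernoulli l) *
            (1 / ((m + 1 - l).factorial : ℚ) * (Polynomial.bernoulli (m + 1 - l)).eval x))
        = ((m + 1).choose l : ℚ) * (1 / 2 ^ l) * _root_.bernoulli l *
            (Polynomial.bernoulli (m + 1 - l)).eval x := by
    intro l hl
    have hl' : l ≤ m + 1 := Finset.mem_range_succ_iff.mp hl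
    rw [Nat.cast_choose ℚ hl', div_pow, one_pow]
    field_simp
  calc (1 / 2 ^ (m + 1) : ℚ) * ∑ l ∈ Finset.range (m + 1 + 1),
        ((m + 1).choose l : ℚ) * (Polynomial.bernoulli l).eval x *
          (Polynomial.bernoulli (m + 1 - l)).eval x
      = ((m + 1).factorial : ℚ) * A := eL
    _ = ((m + 1).factorial : ℚ) * B
          + ((m + 1).factorial : ℚ) * ((1 / 4) * (1 / (m.factorial : ℚ) * (Polynomial.bernoulli m).eval x)) := by
        rw [hk']; ring
    _ = _ := by
        rw [hB, Finset.mul_sum]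
        congr 1
        · exact Finset.sum_congr rfl eR
        · rw [Nat.factorial_succ, Nat.add_sub_cancel]
          push_cast
          field_simp
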